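/- For all x > 0, the modified Bessel function K_1 satisfies e^x K_1(x) ≤ 1 + 1/x. -/

import Mathlib

open MeasureTheory Real

lemma bessel_aux_sqrt (s : ℝ) : s - 1 ≤ Real.sqrt (1 + s ^ 2) - 1 := by
  have h : s ≤ Real.sqrt (1 + s ^ 2) := by
    nlinarith [Real.sq_sqrt (show (0:ℝ) ≤ 1 + s ^ 2 by positivity),
      Real.sqrt_nonneg (1 + s ^ 2)]
  linarith

lemma bessel_aux_exp_int (x : ℝ) (hx : 0 < x) :
    ∫ s in Set.Ioi (1 : ℝ), Real.exp (-x * (s - 1)) = 1 / x := by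
  have h : ∀ s : ℝ, Real.exp (-x * (s - 1)) = Real.exp x * Real.exp (-(x * s)) := by
    intro s; rw [← Real.exp_add]; ring_nf
  simp_rw [h]
  rw [MeasureTheory.integral_const_mul]
  have := integral_comp_mul_left_Ioi (fun y => Real.exp (-y)) 1 hx
  simp only [mul_one, smul_eq_mul] at this
  rw [this, integral_exp_neg_Ioi]
  rw [Real.exp_neg]
  field_simp

/-- For all `x > 0`, the modified Bessel function `K₁` satisfies `e^x K₁(x) ≤ 1 + 1/x`,
where `K₁` is given by the integral representation
`e^x K₁(x) = ∫_0^∞ e^{-x(√(1+s²)-1)} ds`. -/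
theorem bessel_K1_upper (x : ℝ) (hx : 0 < x) :
    ∫ s in Set.Ioi (0 : ℝ), Real.exp (-x * (Real.sqrt (1 + s ^ 2) - 1)) ≤ 1 + 1 / x := by
  set f : ℝ → ℝ := fun s => Real.exp (-x * (Real.sqrt (1 + s ^ 2) - 1)) with hf
  have hcont : Continuous f := by
    apply Real.continuous_exp.comp
    continuity
  have hbound : ∀ s : ℝ, f s ≤ Real.exp (-x * (s - 1)) := by
    intro s
    apply Real.exp_le_exp.2
    have := bessel_aux_sqrt s
    nlinarith
  have hg : IntegrableOn (fun s : ℝ => Real.exp (-x * (s - 1))) (Set.Ioi 0) := by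
    have h : ∀ s : ℝ, Real.exp (-x * (s - 1)) = Real.exp x * Real.exp (-x * s) := by
      intro s; rw [← Real.exp_add]; ring_nf
    simp_rw [h]
    exact (exp_neg_integrableOn_Ioi 0 hx).const_mul _
  have hfint : IntegrableOn f (Set.Ioi 0) := by
    apply hg.mono' (hcont.aestronglyMeasurable.restrict)
    filter_upwards with s
    rw [Real.norm_eq_abs, abs_of_pos (Real.exp_pos _)]
    exact hbound s
  have hsplit : Set.Ioi (0 : ℝ) = Set.Ioc 0 1 ∪ Set.Ioi 1 := (Set.Ioc_union_Ioi_eq_Ioi (by norm_num)).symm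
  rw [hsplit, MeasureTheory.setIntegral_union (Set.Ioc_disjoint_Ioi le_rfl) measurableSet_Ioi
    (hfint.mono_set (hsplit ▸ Set.subset_union_left))
    (hfint.mono_set (hsplit ▸ Set.subset_union_right))]
  have h1 : ∫ s in Set.Ioc (0:ℝ) 1, f s ≤ 1 := by
    have : ∫ s in Set.Ioc (0:ℝ) 1, f s ≤ ∫ s in Set.Ioc (0:ℝ) 1, (1 : ℝ) := by
      apply setIntegral_mono_on (hfint.mono_set (hsplit ▸ Set.subset_union_left))
        (integrableOn_const measure_Ioc_lt_top.ne) measurableSet_Ioc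
      intro s hs
      simp only [hf]
      apply Real.exp_le_one_iff.2
      have h0 : (1:ℝ) ≤ Real.sqrt (1 + s ^ 2) := by
        nlinarith [Real.sq_sqrt (show (0:ℝ) ≤ 1 + s ^ 2 by positivity),
          Real.sqrt_nonneg (1 + s ^ 2)]
      nlinarith
    simpa using this
  have h2 : ∫ s in Set.Ioi (1:ℝ), f s ≤ 1 / x := by
    rw [← bessel_aux_exp_int x hx]
    apply setIntegral_mono_on (hfint.mono_set (hsplit ▸ Set.subset_union_right))
      (hg.mono_set (show Set.Ioi (1:ℝ) ⊆ Set.Ioi 0 from fun s hs => Set.mem_Ioi.2 (lt_trans one_pos (Set.mem_Ioi.1 hs)))) measurableSet_Ioi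
    intro s _
    exact hbound s
  linarith
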